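/- Let r, s be natural numbers with r + s ≥ 1 and let ω be the volume element of Cl(r,s). If c, d are real numbers such that (c·1 + d·ω)² = -1 in Cl(r,s), then c = 0, d = 1 or d = -1, and ω² = -1. -/

import Mathlib

open CliffordAlgebra

/-- The quadratic form `Q_{r,s}` on `ℝ^{r+s}`:
`Q(x) = -(x_0² + ⋯ + x_{r-1}²) + (x_r² + ⋯ + x_{r+s-1}²)`. -/
noncomputable def Qrs (r s : ℕ) : QuadraticForm ℝ (Fin (r + s) → ℝ) :=
  QuadraticMap.weightedSumSquares ℝ
    (fun i : Fin (r + s) => if (i : ℕ) < r then (-1 : ℝ) else 1)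

/-- The volume element `ω = ι(e_0) * ι(e_1) * ⋯ * ι(e_{r+s-1})` of `Cl(r,s)`. -/
noncomputable def volumeElt (r s : ℕ) : CliffordAlgebra (Qrs r s) :=
  (List.ofFn (fun i : Fin (r + s) => ι (Qrs r s) (Pi.single i 1))).prod

/-- An isometry equivalence of `Q_{r,s}` is special if its determinant is `1`. -/
noncomputable def IsSpecial {r s : ℕ} (f : (Qrs r s).IsometryEquiv (Qrs r s)) : Prop :=
  LinearEquiv.det f.toLinearEquiv = 1

section Aux

variable {A : Type*} [Ring A]

lemma aux_mul_prod (x : A) (l : List A) (h : ∀ y ∈ l, x * y = -(y * x)) :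
    x * l.prod = (-1 : A) ^ l.length * (l.prod * x) := by
  induction l with
  | nil => simp
  | cons a t ih =>
    have ha : x * a = -(a * x) := h a List.mem_cons_self
    have ht : ∀ y ∈ t, x * y = -(y * x) := fun y hy => h y (List.mem_cons_of_mem _ hy)
    calc x * (a :: t).prod = (x * a) * t.prod := by rw [List.prod_cons, mul_assoc]
      _ = -(a * (x * t.prod)) := by rw [ha, neg_mul, mul_assoc]
      _ = -(a * ((-1 : A) ^ t.length * (t.prod * x))) := by rw [ih ht]
      _ = (-1 : A) ^ (a :: t).length * ((a :: t).prod * x) := by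
          have hc : Commute a ((-1 : A) ^ t.length) := ((Commute.neg_one_left a).pow_left _).symm
          rw [List.length_cons, List.prod_cons, pow_succ, mul_neg_one, neg_mul, neg_inj]
          simp only [mul_assoc]
          rw [hc.left_comm]

lemma aux_prod_sq (l : List A) (h1 : l.Pairwise fun x y => x * y = -(y * x))
    (h2 : ∀ x ∈ l, x * x = 1 ∨ x * x = -1) :
    l.prod * l.prod = 1 ∨ l.prod * l.prod = -1 := by
  induction l with
  | nil => simp
  | cons a t ih =>
    rw [List.pairwise_cons] at h1
    obtain ⟨hat, ht⟩ := h1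
    have hP := ih ht (fun x hx => h2 x (List.mem_cons_of_mem _ hx))
    have ha := h2 a List.mem_cons_self
    have hcomm : t.prod * a = (-1 : A) ^ t.length * (a * t.prod) := by
      have h' := aux_mul_prod a t hat
      rcases Nat.even_or_odd t.length with he | ho
      · rw [he.neg_one_pow] at h' ⊢; rw [one_mul, h', one_mul]
      · rw [ho.neg_one_pow] at h' ⊢
        rw [neg_one_mul] at h' ⊢
        rw [h', neg_neg]
    have key : (a :: t).prod * (a :: t).prod
        = (-1 : A) ^ t.length * ((a * a) * (t.prod * t.prod)) := by
      rw [List.prod_cons]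
      calc a * t.prod * (a * t.prod) = a * (t.prod * a) * t.prod := by
            rw [mul_assoc, mul_assoc, mul_assoc]
        _ = (-1 : A) ^ t.length * ((a * a) * (t.prod * t.prod)) := by
            have hc : Commute a ((-1 : A) ^ t.length) :=
              ((Commute.neg_one_left a).pow_left _).symm
            rw [hcomm]
            simp only [mul_assoc]
            rw [hc.left_comm]
    rw [key]
    have habs : a * a * (t.prod * t.prod) = 1 ∨ a * a * (t.prod * t.prod) = -1 := by
      rcases ha with ha | ha <;> rcases hP with hP | hP <;> rw [ha, hP] <;> simp
    have hsign : ((-1 : A) ^ t.length = 1) ∨ ((-1 : A) ^ t.length = -1) := by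
      rcases Nat.even_or_odd t.length with he | ho
      · exact Or.inl he.neg_one_pow
      · exact Or.inr ho.neg_one_pow
    rcases hsign with hs | hs <;> rcases habs with hb | hb <;> rw [hs, hb] <;> simp

lemma aux_prod_neg (l : List A) :
    (l.map (fun x => -x)).prod = (-1 : A) ^ l.length * l.prod := by
  induction l with
  | nil => simp
  | cons a t ih =>
    have hc : Commute a ((-1 : A) ^ t.length) := ((Commute.neg_one_left a).pow_left _).symm
    rw [List.map_cons, List.prod_cons, List.prod_cons, ih, List.length_cons, pow_succ,
      mul_neg_one, neg_mul, neg_mul, neg_inj]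
    exact hc.left_comm t.prod

lemma aux_ofFn_decomp {n : ℕ} (hn : 1 ≤ n) (f : Fin n → A) :
    List.ofFn f = f ⟨0, hn⟩ :: List.ofFn (fun i : Fin (n - 1) => f ⟨(i : ℕ) + 1, by omega⟩) := by
  obtain ⟨m, rfl⟩ : ∃ m, n = m + 1 := ⟨n - 1, by omega⟩
  rw [List.ofFn_succ]
  have h0 : f 0 = f ⟨0, hn⟩ := by congr 1
  have h1 : (fun i : Fin m => f i.succ)
      = fun i : Fin (m + 1 - 1) => f ⟨(i : ℕ) + 1, by omega⟩ := by
    funext i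
    congr 1 <;> exact Fin.ext rfl
  first
  | rw [h0, h1]
  | rw [h0]

end Aux

section Main

variable (r s : ℕ)

lemma Qrs_single (i : Fin (r + s)) :
    Qrs r s (Pi.single i 1) = if (i : ℕ) < r then (-1 : ℝ) else 1 := by
  rw [Qrs, QuadraticMap.weightedSumSquares_apply]
  rw [Finset.sum_eq_single i]
  · simp
  · intro j _ hj; simp [Pi.single_apply, hj]
  · simp

lemma Qrs_isOrtho {i j : Fin (r + s)} (hij : i ≠ j) :
    (Qrs r s).IsOrtho (Pi.single i 1) (Pi.single j 1) := by
  rw [QuadraticMap.isOrtho_def, Qrs, QuadraticMap.weightedSumSquares_apply,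
    QuadraticMap.weightedSumSquares_apply, QuadraticMap.weightedSumSquares_apply,
    ← Finset.sum_add_distrib]
  apply Finset.sum_congr rfl
  intro k _
  by_cases hk : k = i <;> by_cases hk' : k = j <;>
    simp_all [Pi.single_apply] <;> ring

lemma volumeElt_anticomm {i j : Fin (r + s)} (hij : i ≠ j) :
    ι (Qrs r s) (Pi.single i 1) * ι (Qrs r s) (Pi.single j 1)
      = -(ι (Qrs r s) (Pi.single j 1) * ι (Qrs r s) (Pi.single i 1)) :=
  ι_mul_ι_comm_of_isOrtho (Qrs_isOrtho r s hij)

lemma ι_single_sq (i : Fin (r + s)) :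
    ι (Qrs r s) (Pi.single i 1) * ι (Qrs r s) (Pi.single i 1) = 1 ∨
    ι (Qrs r s) (Pi.single i 1) * ι (Qrs r s) (Pi.single i 1) = -1 := by
  rw [ι_sq_scalar, Qrs_single]
  by_cases h : (i : ℕ) < r <;> simp [h]

lemma volumeElt_sq :
    volumeElt r s * volumeElt r s = 1 ∨ volumeElt r s * volumeElt r s = -1 := by
  apply aux_prod_sq
  · rw [List.pairwise_ofFn]
    intro i j hij
    exact volumeElt_anticomm r s (ne_of_lt hij)
  · intro x hx
    rw [List.mem_ofFn] at hx
    obtain ⟨i, rfl⟩ := hx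
    exact ι_single_sq r s i

lemma volumeElt_isUnit : IsUnit (volumeElt r s) := by
  rcases volumeElt_sq r s with h | h
  · exact ⟨⟨_, _, h, h⟩, rfl⟩
  · exact ⟨⟨volumeElt r s, -(volumeElt r s),
      by rw [mul_neg, h, neg_neg], by rw [neg_mul, h, neg_neg]⟩, rfl⟩

lemma smul_eq_zero_of_unit {a : ℝ} {u : CliffordAlgebra (Qrs r s)} (hu : IsUnit u)
    (h : a • u = 0) : a = 0 := by
  obtain ⟨v, hv⟩ := hu.exists_right_inv
  have h1 : a • (1 : CliffordAlgebra (Qrs r s)) = 0 := by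
    rw [← hv, ← smul_mul_assoc, h, zero_mul]
  rw [← Algebra.algebraMap_eq_smul_one] at h1
  exact (algebraMap ℝ (CliffordAlgebra (Qrs r s))).injective
    (h1.trans (map_zero _).symm)

lemma volumeElt_indep (hrs : 1 ≤ r + s) {a b : ℝ}
    (hab : a • (1 : CliffordAlgebra (Qrs r s)) + b • volumeElt r s = 0) :
    a = 0 ∧ b = 0 := by
  set ω := volumeElt r s with hω
  have hωu := volumeElt_isUnit r s
  rcases Nat.even_or_odd (r + s) with he | ho
  · -- even case: conjugate by e₀
    set e0 : CliffordAlgebra (Qrs r s) := ι (Qrs r s) (Pi.single (⟨0, hrs⟩ : Fin (r + s)) 1)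
      with he0
    have he0u : IsUnit e0 := by
      rcases ι_single_sq r s (⟨0, hrs⟩ : Fin (r + s)) with h | h
      · exact ⟨⟨_, _, h, h⟩, rfl⟩
      · have h' : e0 * e0 = -1 := h
        exact ⟨⟨e0, -e0, by rw [mul_neg, h', neg_neg], by rw [neg_mul, h', neg_neg]⟩, rfl⟩
    set T : CliffordAlgebra (Qrs r s) :=
      (List.ofFn (fun i : Fin (r + s - 1) =>
        ι (Qrs r s) (Pi.single (⟨(i : ℕ) + 1, by omega⟩ : Fin (r + s)) 1))).prod with hT
    have hdec : ω = e0 * T := by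
      rw [hω, volumeElt, aux_ofFn_decomp hrs, List.prod_cons]
    have hanti : ∀ y ∈ List.ofFn (fun i : Fin (r + s - 1) =>
        ι (Qrs r s) (Pi.single (⟨(i : ℕ) + 1, by omega⟩ : Fin (r + s)) 1)),
        e0 * y = -(y * e0) := by
      intro y hy
      rw [List.mem_ofFn] at hy
      obtain ⟨i, rfl⟩ := hy
      exact volumeElt_anticomm r s (by simp [Fin.ext_iff])
    have hkey := aux_mul_prod e0 _ hanti
    rw [List.length_ofFn, ← hT] at hkey
    have hodd : Odd (r + s - 1) := by
      rcases he with ⟨k, hk⟩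
      exact ⟨k - 1, by omega⟩
    rw [hodd.neg_one_pow, neg_one_mul] at hkey
    -- hkey : e0 * T = -(T * e0)
    have hωe0 : ω * e0 = -(e0 * ω) := by
      have hTe0 : T * e0 = -(e0 * T) := by
        have h' : e0 * T + T * e0 = 0 := by
          rw [← eq_neg_iff_add_eq_zero]; exact hkey
        rw [eq_neg_iff_add_eq_zero, add_comm (T * e0) (e0 * T)]
        exact h'
      rw [hdec, mul_assoc, hTe0, mul_neg, ← mul_assoc]
    have h1 : a • e0 + b • (ω * e0) = 0 := by
      have := congrArg (· * e0) hab
      simpa [add_mul, smul_mul_assoc] using this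
    have h2 : a • e0 + b • (e0 * ω) = 0 := by
      have := congrArg (e0 * ·) hab
      simpa [mul_add, mul_smul_comm] using this
    have h3 : (2 * b) • (e0 * ω) = 0 := by
      rw [hωe0] at h1
      linear_combination (norm := module) h2 - h1
    have hb : b = 0 := by
      have h2b : (2 : ℝ) * b = 0 := smul_eq_zero_of_unit r s (he0u.mul hωu) h3
      linarith
    subst hb
    simp only [zero_smul, add_zero] at hab
    rw [← Algebra.algebraMap_eq_smul_one] at hab
    exact ⟨(algebraMap ℝ (CliffordAlgebra (Qrs r s))).injective
      (hab.trans (map_zero _).symm), rfl⟩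
  · -- odd case: use involute
    have hinv : involute ω = -ω := by
      rw [hω, volumeElt, map_list_prod]
      have hmap : (List.ofFn (fun i : Fin (r + s) => ι (Qrs r s) (Pi.single i 1))).map involute
          = (List.ofFn (fun i : Fin (r + s) => ι (Qrs r s) (Pi.single i 1))).map
            (fun x => -x) := by
        apply List.map_congr_left
        intro x hx
        rw [List.mem_ofFn] at hx
        obtain ⟨i, rfl⟩ := hx
        exact involute_ι _
      rw [hmap, aux_prod_neg, List.length_ofFn, ho.neg_one_pow, neg_one_mul]
    have h2 : a • (1 : CliffordAlgebra (Qrs r s)) - b • ω = 0 := by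
      have := congrArg involute hab
      simp only [map_add, map_smul, map_one, map_zero, hinv, smul_neg] at this
      rw [← sub_eq_add_neg] at this
      exact this
    have ha : a = 0 := by
      have hsum : (2 * a) • (1 : CliffordAlgebra (Qrs r s)) = 0 := by
        linear_combination (norm := module) hab + h2
      rw [← Algebra.algebraMap_eq_smul_one] at hsum
      have h2a : (2 * a : ℝ) = 0 := (algebraMap ℝ (CliffordAlgebra (Qrs r s))).injective
        (hsum.trans (map_zero _).symm)
      linarith
    subst ha
    simp only [zero_smul, zero_add] at hab
    exact ⟨rfl, smul_eq_zero_of_unit r s hωu hab⟩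

end Main

/-- If `(c·1 + d·ω)² = -1` in `Cl(r,s)` with `r + s ≥ 1`, then `c = 0`,
`d = ±1`, and `ω² = -1`. -/
theorem sq_eq_neg_one_of_span (r s : ℕ) (hrs : 1 ≤ r + s) (c d : ℝ)
    (h : (c • (1 : CliffordAlgebra (Qrs r s)) + d • volumeElt r s) ^ 2 = -1) :
    c = 0 ∧ (d = 1 ∨ d = -1) ∧ volumeElt r s ^ 2 = -1 := by
  set ω := volumeElt r s with hω
  have hexp : (c • (1 : CliffordAlgebra (Qrs r s)) + d • ω) ^ 2
      = (c * c) • (1 : CliffordAlgebra (Qrs r s)) + (2 * (c * d)) • ω + (d * d) • (ω * ω) := by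
    rw [sq]
    simp only [add_mul, mul_add, smul_mul_smul_comm, one_mul, mul_one]
    module
  rcases volumeElt_sq r s with hu | hu
  · exfalso
    rw [hexp, hu] at h
    have h0 : (c * c + d * d + 1) • (1 : CliffordAlgebra (Qrs r s)) + (2 * (c * d)) • ω = 0 := by
      have hone : -(1 : CliffordAlgebra (Qrs r s)) = -((1 : ℝ) • 1) := by simp
      rw [hone] at h
      linear_combination (norm := module) h
    obtain ⟨h1, h2⟩ := volumeElt_indep r s hrs h0
    nlinarith
  · rw [hexp, hu] at h
    have h0 : (c * c - d * d + 1) • (1 : CliffordAlgebra (Qrs r s)) + (2 * (c * d)) • ω = 0 := by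
      have hone : -(1 : CliffordAlgebra (Qrs r s)) = -((1 : ℝ) • 1) := by simp
      rw [hone] at h
      linear_combination (norm := module) h
    obtain ⟨h1, h2⟩ := volumeElt_indep r s hrs h0
    have hcd : c * d = 0 := by linarith
    rcases mul_eq_zero.mp hcd with hc | hd
    · refine ⟨hc, ?_, by rw [sq, hu]⟩
      subst hc
      have : d * d = 1 := by nlinarith
      rcases mul_self_eq_one_iff.mp this with h | h
      · exact Or.inl h
      · exact Or.inr h
    · exfalso
      subst hd
      nlinarith
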